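/- Let X and Y be Banach spaces and let p ∈ [1,∞). If there exists a uniformly continuous almost uncollapsed map φ : X → Y, then there exists a uniformly continuous solvent map Φ : X → ℓ_p(Y), where ℓ_p(Y) is the Banach space of sequences (y_n) in Y with ∑_n ‖y_n‖^p < ∞ equipped with the norm (∑_n ‖y_n‖^p)^{1/p}. -/

import Mathlib

open Metric
open scoped ENNReal NNReal

/-- Exact compression modulus. -/
noncomputable def exactComp {M N : Type*} [PseudoMetricSpace M] [PseudoMetricSpace N]
    (f : M → N) (t : ℝ) : ℝ :=
  sInf {r : ℝ | ∃ x y : M, dist x y = t ∧ dist (f x) (f y) = r}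

/-- Coarse map: the expansion modulus is finite for every t. -/
def Coarse {M N : Type*} [PseudoMetricSpace M] [PseudoMetricSpace N] (f : M → N) : Prop :=
  ∀ t : ℝ, ∃ C : ℝ, ∀ x y : M, dist x y ≤ t → dist (f x) (f y) ≤ C

/-- Solvent map. -/
def Solvent {M N : Type*} [PseudoMetricSpace M] [PseudoMetricSpace N] (f : M → N) : Prop :=
  ∀ n : ℕ, ∃ R : ℝ, 0 < R ∧ ∀ x y : M,
    dist x y ∈ Set.Icc R (R + (n : ℝ)) → (n : ℝ) < dist (f x) (f y)

/-- Almost uncollapsed map. -/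
noncomputable def AlmostUncollapsed {M N : Type*} [PseudoMetricSpace M] [PseudoMetricSpace N]
    (f : M → N) : Prop :=
  ∃ t : ℝ, 0 < t ∧ 0 < exactComp f t

/-- If there is a uniformly continuous almost uncollapsed map φ : X → Y, then there is a
uniformly continuous solvent map Φ : X → ℓ_p(Y), for p ∈ [1,∞). -/
theorem exists_uniformContinuous_solvent_into_lp
    {X Y : Type*} [NormedAddCommGroup X] [NormedSpace ℝ X] [CompleteSpace X]
    [NormedAddCommGroup Y] [NormedSpace ℝ Y] [CompleteSpace Y]
    (p : ℝ≥0∞) [Fact (1 ≤ p)] (hp : p ≠ ⊤)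
    (φ : X → Y) (hφ : UniformContinuous φ) (hu : AlmostUncollapsed φ) :
    ∃ Φ : X → lp (fun _ : ℕ => Y) p, UniformContinuous Φ ∧ Solvent Φ := by
  classical
  have hp1 : (1 : ℝ≥0∞) ≤ p := Fact.out
  have hp0 : p ≠ 0 := by
    intro h; rw [h] at hp1; exact (by simp at hp1)
  set q : ℝ := p.toReal with hqdef
  have hq0 : 0 < q := ENNReal.toReal_pos hp0 hp
  obtain ⟨t, ht, hδpos⟩ := hu
  set δ : ℝ := exactComp φ t with hδdef
  -- every pair at distance exactly t is separated by at least δ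
  have hbdd : BddBelow {r : ℝ | ∃ x y : X, dist x y = t ∧ dist (φ x) (φ y) = r} :=
    ⟨0, fun r hr => by obtain ⟨x, y, _, hr⟩ := hr; rw [← hr]; exact dist_nonneg⟩
  have key : ∀ x y : X, dist x y = t → δ ≤ dist (φ x) (φ y) := fun x y hxy =>
    csInf_le hbdd ⟨x, y, hxy, rfl⟩
  -- η : modulus for δ/2
  obtain ⟨η, hη, hηle⟩ : ∃ η : ℝ, 0 < η ∧ ∀ u v : X, dist u v ≤ η → dist (φ u) (φ v) ≤ δ / 2 := by
    obtain ⟨d, hd, h⟩ := Metric.uniformContinuous_iff.1 hφ (δ / 2) (by linarith)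
    exact ⟨d / 2, by linarith, fun u v huv => le_of_lt (h (lt_of_le_of_lt huv (by linarith)))⟩
  -- separation on the band [t, t + η]
  have key2 : ∀ u v : X, t ≤ dist u v → dist u v ≤ t + η → δ / 2 ≤ dist (φ u) (φ v) := by
    intro u v h1 h2
    set s : ℝ := dist u v with hs
    have hs0 : 0 < s := lt_of_lt_of_le ht h1
    set w : X := u + (t / s) • (v - u) with hw
    have hts : 0 ≤ t / s := div_nonneg ht.le hs0.le
    have huw : dist u w = t := by
      rw [hw, dist_eq_norm]
      have : u - (u + (t / s) • (v - u)) = -((t / s) • (v - u)) := by abel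
      rw [this, norm_neg, norm_smul, Real.norm_of_nonneg hts]
      have : ‖v - u‖ = s := by rw [hs, dist_comm, dist_eq_norm]
      rw [this]
      field_simp
    have hwv : dist w v ≤ η := by
      have hwv' : dist w v = s - t := by
        rw [hw, dist_eq_norm]
        have h3 : u + (t / s) • (v - u) - v = -((1 - t / s) • (v - u)) := by
          rw [sub_smul, one_smul]; abel
        rw [h3, norm_neg, norm_smul]
        have h4 : ‖v - u‖ = s := by rw [hs, dist_comm, dist_eq_norm]
        have h5 : (0:ℝ) ≤ 1 - t / s := by
          rw [sub_nonneg, div_le_one hs0]; exact h1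
        rw [h4, Real.norm_of_nonneg h5]
        field_simp
      rw [hwv']; linarith
    have hd1 : δ ≤ dist (φ u) (φ w) := key u w huw
    have hd2 : dist (φ w) (φ v) ≤ δ / 2 := hηle w v hwv
    have := dist_triangle (φ u) (φ v) (φ w)
    have h6 : dist (φ u) (φ w) ≤ dist (φ u) (φ v) + dist (φ v) (φ w) :=
      dist_triangle (φ u) (φ v) (φ w)
    rw [dist_comm (φ v) (φ w)] at h6
    linarith
  -- a convenient modulus of continuity
  have mod : ∀ ε : ℝ, 0 < ε → ∃ d : ℝ, 0 < d ∧ d ≤ 1 ∧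
      ∀ u v : X, dist u v ≤ d → dist (φ u) (φ v) ≤ ε := by
    intro ε hε
    obtain ⟨d, hd, h⟩ := Metric.uniformContinuous_iff.1 hφ ε hε
    refine ⟨min 1 (d / 2), lt_min one_pos (by linarith), min_le_left _ _, fun u v huv => ?_⟩
    exact le_of_lt (h (lt_of_le_of_lt (huv.trans (min_le_right _ _)) (by linarith)))
  -- the scalars
  set c : ℕ → ℝ := fun n => 2 * ((n : ℝ) + 1) / δ with hcdef
  have hc : ∀ n, 0 < c n := fun n => by
    apply div_pos _ hδpos; positivity
  set en : ℕ → ℝ := fun n => (1 / 2 : ℝ) ^ n / c n with hendef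
  have hen : ∀ n, 0 < en n := fun n => div_pos (by positivity) (hc n)
  have H : ∀ n : ℕ, ∃ d : ℝ, 0 < d ∧ d ≤ 1 ∧
      ∀ u v : X, dist u v ≤ d → dist (φ u) (φ v) ≤ en n := fun n => mod (en n) (hen n)
  choose dn hdn0 hdn1 hdn using H
  set lam : ℕ → ℝ := fun n => ((n : ℝ) + 1) / dn n with hlamdef
  have hlam0 : ∀ n, 0 < lam n := fun n => div_pos (by positivity) (hdn0 n)
  have hlam_eq : ∀ n : ℕ, lam n = ((n : ℝ) + 1) / dn n := fun n => rfl
  have hc_eq : ∀ n : ℕ, c n = 2 * ((n : ℝ) + 1) / δ := fun n => rfl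
  have hen_eq : ∀ n : ℕ, en n = (1 / 2 : ℝ) ^ n / c n := fun n => rfl
  have hlamge : ∀ n : ℕ, (n : ℝ) + 1 ≤ lam n := by
    intro n
    rw [hlam_eq, le_div_iff₀ (hdn0 n)]
    nlinarith [hdn1 n, hdn0 n, Nat.cast_nonneg (α := ℝ) n]
  -- the coordinate maps
  set g : ℕ → X → X := fun n x => (lam n)⁻¹ • x with hgdef
  have hgdist : ∀ (n : ℕ) (x y : X), dist (g n x) (g n y) = dist x y / lam n := by
    intro n x y
    rw [hgdef]
    simp only [dist_eq_norm, ← smul_sub, norm_smul, Real.norm_of_nonneg (inv_nonneg.2 (hlam0 n).le)]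
    rw [div_eq_inv_mul, mul_comm]
  set F : ℕ → X → Y := fun n x => c n • (φ (g n x) - φ 0) with hFdef
  have hFnorm : ∀ (n : ℕ) (x y : X), ‖F n x - F n y‖ = c n * dist (φ (g n x)) (φ (g n y)) := by
    intro n x y
    rw [hFdef]
    simp only []
    rw [← smul_sub, sub_sub_sub_cancel_right, norm_smul, Real.norm_of_nonneg (hc n).le,
      dist_eq_norm]
  have hF0 : ∀ n : ℕ, F n 0 = 0 := by
    intro n
    rw [hFdef]
    simp only [hgdef]
    rw [smul_zero, sub_self, smul_zero]
  -- small-distance estimate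
  have E1 : ∀ (n : ℕ) (x y : X), dist x y ≤ (n : ℝ) + 1 → ‖F n x - F n y‖ ≤ (1 / 2 : ℝ) ^ n := by
    intro n x y hxy
    have h1 : dist (g n x) (g n y) ≤ dn n := by
      rw [hgdist]
      rw [div_le_iff₀ (hlam0 n)]
      calc dist x y ≤ (n : ℝ) + 1 := hxy
      _ = dn n * lam n := by
          rw [hlam_eq, mul_div_assoc', mul_comm, mul_div_assoc, div_self (hdn0 n).ne', mul_one]
    have h2 : dist (φ (g n x)) (φ (g n y)) ≤ en n := hdn n _ _ h1
    rw [hFnorm]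
    calc c n * dist (φ (g n x)) (φ (g n y)) ≤ c n * en n :=
        mul_le_mul_of_nonneg_left h2 (hc n).le
    _ = (1 / 2 : ℝ) ^ n := by
        rw [hen_eq, mul_div_assoc', mul_comm, mul_div_assoc, div_self (hc n).ne', mul_one]
  -- large-distance (band) estimate
  have E2 : ∀ (n : ℕ) (x y : X), lam n * t ≤ dist x y → dist x y ≤ lam n * (t + η) →
      (n : ℝ) + 1 ≤ ‖F n x - F n y‖ := by
    intro n x y h1 h2
    have ht1 : t ≤ dist (g n x) (g n y) := by
      rw [hgdist, le_div_iff₀ (hlam0 n)]; linarith [h1]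
    have ht2 : dist (g n x) (g n y) ≤ t + η := by
      rw [hgdist, div_le_iff₀ (hlam0 n)]; linarith [h2]
    have h3 : δ / 2 ≤ dist (φ (g n x)) (φ (g n y)) := key2 _ _ ht1 ht2
    rw [hFnorm]
    calc (n : ℝ) + 1 = c n * (δ / 2) := by rw [hc_eq]; field_simp
    _ ≤ c n * dist (φ (g n x)) (φ (g n y)) := mul_le_mul_of_nonneg_left h3 (hc n).le
  -- geometric comparison facts
  set r : ℝ := (1 / 2 : ℝ) ^ q with hrdef
  have hr0 : 0 < r := Real.rpow_pos_of_pos (by norm_num) q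
  have hr1 : r < 1 := Real.rpow_lt_one (by norm_num) (by norm_num) hq0
  have hpow : ∀ k : ℕ, ((1 / 2 : ℝ) ^ k) ^ q = r ^ k := by
    intro k
    rw [hrdef, ← Real.rpow_natCast ((1 / 2 : ℝ) ^ q) k, ← Real.rpow_natCast (1 / 2 : ℝ) k,
      ← Real.rpow_mul (by norm_num), ← Real.rpow_mul (by norm_num), mul_comm]
  have hsumr : Summable fun n : ℕ => r ^ n := summable_geometric_of_lt_one hr0.le hr1
  -- membership in ℓ^p
  have Mem : ∀ x : X, Memℓp (fun n => F n x) p := by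
    intro x
    apply memℓp_gen
    obtain ⟨N, hN⟩ := exists_nat_ge ‖x‖
    rw [← summable_nat_add_iff N]
    apply Summable.of_nonneg_of_le (fun n => by positivity)
      (fun n => ?_) ((summable_nat_add_iff N).2 hsumr)
    have hb : ‖F (n + N) x - F (n + N) 0‖ ≤ (1 / 2 : ℝ) ^ (n + N) := by
      apply E1
      rw [dist_zero_right]
      calc ‖x‖ ≤ (N : ℝ) := hN
      _ ≤ ((n + N : ℕ) : ℝ) + 1 := by push_cast; linarith [Nat.cast_nonneg (α := ℝ) n]
    rw [hF0, sub_zero] at hb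
    calc ‖F (n + N) x‖ ^ q ≤ ((1 / 2 : ℝ) ^ (n + N)) ^ q :=
        Real.rpow_le_rpow (norm_nonneg _) hb hq0.le
    _ = r ^ (n + N) := hpow _
  set Φ : X → lp (fun _ : ℕ => Y) p := fun x => ⟨fun n => F n x, Mem x⟩ with hΦdef
  have hΦapply : ∀ (x y : X) (n : ℕ), (Φ x - Φ y : lp (fun _ : ℕ => Y) p) n = F n x - F n y := by
    intro x y n
    rw [lp.coeFn_sub, Pi.sub_apply]
  refine ⟨Φ, ?_, ?_⟩
  · -- uniform continuity
    rw [Metric.uniformContinuous_iff]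
    intro ε hε
    -- choose N for the tail
    obtain ⟨N, hNr⟩ : ∃ N : ℕ, (1 - r)⁻¹ * r ^ N ≤ (ε / 2) ^ q / 2 := by
      have hεq : (0:ℝ) < (ε / 2) ^ q := Real.rpow_pos_of_pos (by linarith) q
      obtain ⟨N, hN⟩ := exists_pow_lt_of_lt_one
        (x := (ε / 2) ^ q / 2 * (1 - r))
        (mul_pos (by linarith) (by linarith)) hr1
      refine ⟨N, ?_⟩
      rw [inv_mul_le_iff₀ (by linarith)]
      calc r ^ N ≤ (ε / 2) ^ q / 2 * (1 - r) := hN.le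
      _ = (1 - r) * ((ε / 2) ^ q / 2) := by ring
    -- head thresholds
    set γ : ℝ := ((ε / 2) ^ q / (2 * ((N : ℝ) + 1))) ^ (1 / q) with hγdef
    have hεq : (0:ℝ) < (ε / 2) ^ q := Real.rpow_pos_of_pos (by linarith) q
    have hγ0 : 0 < γ := by
      apply Real.rpow_pos_of_pos
      exact div_pos hεq (by positivity)
    have hγq : γ ^ q = (ε / 2) ^ q / (2 * ((N : ℝ) + 1)) := by
      rw [hγdef, ← Real.rpow_mul (by positivity), one_div, inv_mul_cancel₀ hq0.ne',
        Real.rpow_one]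
    have head : ∀ n : ℕ, ∃ θ : ℝ, 0 < θ ∧ ∀ x y : X, dist x y ≤ θ →
        ‖F n x - F n y‖ ≤ γ := by
      intro n
      obtain ⟨d, hd0, _, hd⟩ := mod (γ / c n) (div_pos hγ0 (hc n))
      refine ⟨d * lam n, mul_pos hd0 (hlam0 n), fun x y hxy => ?_⟩
      have h1 : dist (g n x) (g n y) ≤ d := by
        rw [hgdist, div_le_iff₀ (hlam0 n)]; exact hxy
      rw [hFnorm]
      calc c n * dist (φ (g n x)) (φ (g n y)) ≤ c n * (γ / c n) :=
          mul_le_mul_of_nonneg_left (hd _ _ h1) (hc n).le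
      _ = γ := by have := (hc n).ne'; field_simp
    choose θs hθs0 hθs using head
    set θ : ℝ := min 1 ((Finset.range (N + 1)).inf' (by simp) θs) with hθdef
    have hθ0 : 0 < θ := by
      apply lt_min one_pos
      apply Finset.lt_inf'_iff (by simp) |>.2
      intro n _; exact hθs0 n
    refine ⟨θ, hθ0, fun {x y} hxy => ?_⟩
    have hxy1 : dist x y ≤ 1 := le_trans hxy.le (min_le_left _ _)
    have hxyθ : ∀ n, n < N + 1 → dist x y ≤ θs n := by
      intro n hn
      exact le_trans hxy.le ((min_le_right _ _).trans
        (Finset.inf'_le θs (Finset.mem_range.2 hn)))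
    -- summability of the coordinates of the difference
    have hsumdiff : Summable fun n : ℕ => ‖F n x - F n y‖ ^ q := by
      have := ((lp.memℓp (Φ x - Φ y)).summable hq0)
      have heq : (fun n : ℕ => ‖(Φ x - Φ y : lp (fun _ : ℕ => Y) p) n‖ ^ q)
          = fun n : ℕ => ‖F n x - F n y‖ ^ q := by
        funext n; rw [hΦapply]
      rwa [heq] at this
    -- bound the tsum
    have htsum : ∑' n : ℕ, ‖F n x - F n y‖ ^ q ≤ (ε / 2) ^ q := by
      rw [← Summable.sum_add_tsum_nat_add (N + 1) hsumdiff]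
      have hhead : ∑ n ∈ Finset.range (N + 1), ‖F n x - F n y‖ ^ q ≤ (ε / 2) ^ q / 2 := by
        calc ∑ n ∈ Finset.range (N + 1), ‖F n x - F n y‖ ^ q
            ≤ ∑ _n ∈ Finset.range (N + 1), γ ^ q := by
              apply Finset.sum_le_sum
              intro n hn
              exact Real.rpow_le_rpow (norm_nonneg _)
                (hθs n x y (hxyθ n (Finset.mem_range.1 hn))) hq0.le
        _ = ((N : ℝ) + 1) * γ ^ q := by
              rw [Finset.sum_const, Finset.card_range]; push_cast; ring
        _ = ((N : ℝ) + 1) * ((ε / 2) ^ q / (2 * ((N : ℝ) + 1))) := by rw [hγq]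
        _ = (ε / 2) ^ q / 2 := by
              have : ((N : ℝ) + 1) ≠ 0 := by positivity
              field_simp
      have htail : ∑' n : ℕ, ‖F (n + (N + 1)) x - F (n + (N + 1)) y‖ ^ q
          ≤ (ε / 2) ^ q / 2 := by
        have hb : ∀ n : ℕ, ‖F (n + (N + 1)) x - F (n + (N + 1)) y‖ ^ q ≤ r ^ (n + (N + 1)) := by
          intro n
          have h1 : ‖F (n + (N + 1)) x - F (n + (N + 1)) y‖ ≤ (1 / 2 : ℝ) ^ (n + (N + 1)) := by
            apply E1
            calc dist x y ≤ 1 := hxy1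
            _ ≤ ((n + (N + 1) : ℕ) : ℝ) + 1 := by
                push_cast
                linarith [Nat.cast_nonneg (α := ℝ) n, Nat.cast_nonneg (α := ℝ) N]
          calc ‖F (n + (N + 1)) x - F (n + (N + 1)) y‖ ^ q
              ≤ ((1 / 2 : ℝ) ^ (n + (N + 1))) ^ q :=
                Real.rpow_le_rpow (norm_nonneg _) h1 hq0.le
          _ = r ^ (n + (N + 1)) := hpow _
        calc ∑' n : ℕ, ‖F (n + (N + 1)) x - F (n + (N + 1)) y‖ ^ q
            ≤ ∑' n : ℕ, r ^ (n + (N + 1)) :=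
              Summable.tsum_le_tsum hb
                ((summable_nat_add_iff (f := fun n => ‖F n x - F n y‖ ^ q) (N + 1)).2 hsumdiff)
                ((summable_nat_add_iff (f := fun n => r ^ n) (N + 1)).2 hsumr)
        _ = (∑' n : ℕ, r ^ n) * r ^ (N + 1) := by
              simp_rw [pow_add]
              rw [tsum_mul_right]
        _ = (1 - r)⁻¹ * r ^ (N + 1) := by rw [tsum_geometric_of_lt_one hr0.le hr1]
        _ ≤ (1 - r)⁻¹ * r ^ N := by
              apply mul_le_mul_of_nonneg_left _ (inv_nonneg.2 (by linarith))
              exact pow_le_pow_of_le_one hr0.le hr1.le (by omega)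
        _ ≤ (ε / 2) ^ q / 2 := hNr
      linarith
    have hnorm : dist (Φ x) (Φ y) ≤ ε / 2 := by
      rw [dist_eq_norm]
      apply lp.norm_le_of_tsum_le hq0 (by linarith : (0:ℝ) ≤ ε / 2)
      have heq : (fun i : ℕ => ‖(Φ x - Φ y : lp (fun _ : ℕ => Y) p) i‖ ^ p.toReal)
          = fun i : ℕ => ‖F i x - F i y‖ ^ q := by
        funext i; rw [hΦapply]
      rw [heq]
      exact htsum
    linarith
  · -- solvency
    intro n
    set m : ℕ := max n ⌈(n : ℝ) / η⌉₊ with hmdef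
    have hmn : n ≤ m := le_max_left _ _
    have hlamη : (n : ℝ) ≤ lam m * η := by
      have h1 : (n : ℝ) / η ≤ (⌈(n : ℝ) / η⌉₊ : ℝ) := Nat.le_ceil _
      have h2 : (⌈(n : ℝ) / η⌉₊ : ℝ) ≤ (m : ℝ) := by
        exact_mod_cast Nat.cast_le.2 (le_max_right _ _)
      have h3 : (n : ℝ) / η ≤ lam m := le_trans (h1.trans h2) (by linarith [hlamge m])
      calc (n : ℝ) = ((n : ℝ) / η) * η := by field_simp
      _ ≤ lam m * η := mul_le_mul_of_nonneg_right h3 hη.le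
    refine ⟨lam m * t, mul_pos (hlam0 m) ht, fun x y hxy => ?_⟩
    obtain ⟨h1, h2⟩ := hxy
    have h2' : dist x y ≤ lam m * (t + η) := by
      calc dist x y ≤ lam m * t + (n : ℝ) := h2
      _ ≤ lam m * t + lam m * η := by linarith
      _ = lam m * (t + η) := by ring
    have hE2 := E2 m x y h1 h2'
    have hcoord : ‖F m x - F m y‖ ≤ ‖(Φ x - Φ y : lp (fun _ : ℕ => Y) p)‖ := by
      rw [← hΦapply x y m]
      exact lp.norm_apply_le_norm hp0 _ m
    rw [dist_eq_norm]
    have hmn' : (n : ℝ) < (m : ℝ) + 1 := by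
      have : (n : ℝ) ≤ (m : ℝ) := Nat.cast_le.2 hmn
      linarith
    linarith
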